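/- Let C be an [n,k] MDS code over a finite field F_q with q elements, so its minimum distance is d_min = n - k + 1. Then its weight enumerator coefficients are A_0 = 1, A_w = 0 for 1 ≤ w ≤ d_min - 1, and A_w = Σ_{j=0}^{w-d_min} C(n,w) C(w,j) (-1)^j (q^{k+w-n-j} - 1) for d_min ≤ w ≤ n, where C(a,b) denotes the binomial coefficient. -/
import Mathlib


open Finset

section aux
set_option linter.unusedSectionVars false
variable {n k q : ℕ} {F : Type} [Field F] [Fintype F] [DecidableEq F]

def resMap (C : Submodule F (Fin n → F)) (S : Finset (Fin n)) : C →ₗ[F] (↥S → F) where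
  toFun c i := (c : Fin n → F) i
  map_add' _ _ := rfl
  map_smul' _ _ := rfl

lemma mem_ker_resMap {C : Submodule F (Fin n → F)} {S : Finset (Fin n)} {x : C} :
    x ∈ LinearMap.ker (resMap C S) ↔ ∀ i ∈ S, (x : Fin n → F) i = 0 := by
  simp only [LinearMap.mem_ker, resMap, LinearMap.coe_mk, AddHom.coe_mk, funext_iff]
  exact ⟨fun h i hi => h ⟨i, hi⟩, fun h i => h i.1 i.2⟩

lemma ker_resMap_eq_bot (C : Submodule F (Fin n → F))
    (hLB : ∀ c ∈ C, c ≠ 0 → n - k + 1 ≤ hammingNorm c) (hkn : k ≤ n)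
    {S : Finset (Fin n)} (hS : k ≤ S.card) : LinearMap.ker (resMap C S) = ⊥ := by
  rw [eq_bot_iff]
  intro x hx
  rw [Submodule.mem_bot]
  by_contra h0
  have hx0 : (x : Fin n → F) ≠ 0 := by
    simpa [Submodule.coe_eq_zero] using h0
  have h1 : n - k + 1 ≤ hammingNorm (x : Fin n → F) := hLB x x.2 hx0
  have hsub : ({i | (x : Fin n → F) i ≠ 0} : Finset (Fin n)) ⊆ Sᶜ := by
    intro i hi
    simp only [mem_filter, mem_univ, true_and] at hi
    rw [Finset.mem_compl]
    intro hiS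
    exact hi (mem_ker_resMap.1 hx i hiS)
  have h2 : hammingNorm (x : Fin n → F) ≤ Sᶜ.card := Finset.card_le_card hsub
  have h3 : Sᶜ.card = n - S.card := by
    rw [Finset.card_compl, Fintype.card_fin]
  omega

lemma count_lemma (C : Submodule F (Fin n → F)) (hdim : Module.finrank F C = k)
    (hq : q = Fintype.card F)
    (hLB : ∀ c ∈ C, c ≠ 0 → n - k + 1 ≤ hammingNorm c) (hkn : k ≤ n)
    (T : Finset (Fin n)) :
    Nat.card {c : Fin n → F // c ∈ C ∧ ∀ i ∉ T, c i = 0} = q ^ (k - (n - T.card)) := by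
  classical
  set S := Tᶜ with hSdef
  have e : {c : Fin n → F // c ∈ C ∧ ∀ i ∉ T, c i = 0} ≃ LinearMap.ker (resMap C S) :=
    { toFun := fun c => ⟨⟨c.1, c.2.1⟩, mem_ker_resMap.2
        (fun i hi => c.2.2 i (by simpa [hSdef] using hi))⟩
      invFun := fun x => ⟨x.1.1, x.1.2,
        fun i hi => mem_ker_resMap.1 x.2 i (by simpa [hSdef] using hi)⟩
      left_inv := fun _ => rfl
      right_inv := fun _ => rfl }
  rw [Nat.card_congr e]
  have hScard : S.card = n - T.card := by
    rw [hSdef, Finset.card_compl, Fintype.card_fin]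
  have hTn : T.card ≤ n := by
    simpa using Finset.card_le_card (Finset.subset_univ T)
  by_cases hc : k ≤ S.card
  · rw [ker_resMap_eq_bot C hLB hkn hc]
    have : k - (n - T.card) = 0 := by omega
    simp [this]
  · push_neg at hc
    obtain ⟨S', hSS', hS'card⟩ := Finset.exists_superset_card_eq hc.le
      (by simpa [Fintype.card_fin] using hkn)
    have hinj : Function.Injective (resMap C S') := by
      rw [← LinearMap.ker_eq_bot]
      exact ker_resMap_eq_bot C hLB hkn hS'card.ge
    have hcards : Fintype.card C = Fintype.card (↥S' → F) := by
      rw [Module.card_eq_pow_finrank (K := F) (V := C), hdim, Fintype.card_fun,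
        Fintype.card_coe, hS'card]
    have hsurj' : Function.Surjective (resMap C S') :=
      ((Fintype.bijective_iff_injective_and_card _).2 ⟨hinj, hcards⟩).2
    have hsurj : Function.Surjective (resMap C S) := by
      have hcomp : ⇑(resMap C S) =
          (fun (g : ↥S' → F) (i : ↥S) => g ⟨i.1, hSS' i.2⟩) ∘ ⇑(resMap C S') := rfl
      rw [hcomp]
      refine Function.Surjective.comp (fun g => ?_) hsurj'
      exact ⟨fun j => if hj : j.1 ∈ S then g ⟨j.1, hj⟩ else 0, by
        funext i; simp [i.2]⟩
    have hrank := LinearMap.finrank_range_add_finrank_ker (resMap C S)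
    rw [LinearMap.range_eq_top.2 hsurj] at hrank
    have h1 : Module.finrank F (⊤ : Submodule F (↥S → F)) = S.card := by
      rw [finrank_top, Module.finrank_pi, Fintype.card_coe]
    have hker : Module.finrank F (LinearMap.ker (resMap C S)) = k - S.card := by
      rw [h1, hdim] at hrank; omega
    rw [Nat.card_eq_fintype_card, Module.card_eq_pow_finrank (K := F), hker, hq]
    congr 1
    omega



lemma neg_one_pow_sub {a b : ℕ} (h : b ≤ a) : (-1 : ℚ) ^ (a - b) = (-1) ^ a * (-1) ^ b := by
  have : a - b + b = a := Nat.sub_add_cancel h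
  calc (-1 : ℚ) ^ (a - b) = (-1) ^ (a - b) * ((-1) ^ b * (-1) ^ b) := by
        rw [← pow_add]; simp [← two_mul]
    _ = (-1) ^ a * (-1) ^ b := by rw [← mul_assoc, ← pow_add, this]

lemma sum_pow_neg_one_powerset {α : Type*} [DecidableEq α] (x : Finset α) :
    (∑ U ∈ x.powerset, (-1 : ℚ) ^ U.card) = if x = ∅ then 1 else 0 := by
  have := @Finset.sum_powerset_neg_one_pow_card α _ x
  have h2 : ((∑ U ∈ x.powerset, (-1 : ℤ) ^ U.card : ℤ) : ℚ)
      = ∑ U ∈ x.powerset, (-1 : ℚ) ^ U.card := by push_cast; rfl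
  rw [← h2, this]
  split <;> norm_num

lemma mobius_inv {α : Type*} [DecidableEq α] (E B : Finset α → ℚ)
    (h : ∀ S, B S = ∑ R ∈ S.powerset, E R) (T : Finset α) :
    E T = ∑ S ∈ T.powerset, (-1 : ℚ) ^ (T.card - S.card) * B S := by
  have key : ∀ R ∈ T.powerset,
      (∑ S ∈ T.powerset with R ⊆ S, (-1 : ℚ) ^ (T.card - S.card))
        = if R = T then 1 else 0 := by
    intro R hR
    rw [Finset.mem_powerset] at hR
    have hre : ∑ S ∈ T.powerset with R ⊆ S, (-1 : ℚ) ^ (T.card - S.card)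
        = ∑ U ∈ (T \ R).powerset, (-1 : ℚ) ^ (T.card - (U ∪ R).card) := by
      refine Finset.sum_nbij' (fun S => S \ R) (fun U => U ∪ R) ?_ ?_ ?_ ?_ ?_
      · intro S hS
        simp only [Finset.mem_filter, Finset.mem_powerset] at hS
        exact Finset.mem_powerset.2 (Finset.sdiff_subset_sdiff hS.1 subset_rfl)
      · intro U hU
        rw [Finset.mem_powerset] at hU
        simp only [Finset.mem_filter, Finset.mem_powerset]
        exact ⟨Finset.union_subset (hU.trans (Finset.sdiff_subset)) hR,
          Finset.subset_union_right⟩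
      · intro S hS
        simp only [Finset.mem_filter, Finset.mem_powerset] at hS
        exact Finset.sdiff_union_of_subset hS.2
      · intro U hU
        rw [Finset.mem_powerset] at hU
        exact Finset.union_sdiff_cancel_right
          (Finset.disjoint_of_subset_left hU Finset.sdiff_disjoint)
      · intro S hS
        simp only [Finset.mem_filter, Finset.mem_powerset] at hS
        rw [Finset.sdiff_union_of_subset hS.2]
    rw [hre]
    have hcardU : ∀ U ∈ (T \ R).powerset, (-1 : ℚ) ^ (T.card - (U ∪ R).card)
        = (-1) ^ T.card * (-1) ^ R.card * (-1) ^ U.card := by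
      intro U hU
      rw [Finset.mem_powerset] at hU
      have hdisj : Disjoint U R := Finset.disjoint_of_subset_left hU Finset.sdiff_disjoint
      have hUR : (U ∪ R).card = U.card + R.card := Finset.card_union_of_disjoint hdisj
      have hle : (U ∪ R).card ≤ T.card :=
        Finset.card_le_card (Finset.union_subset (hU.trans Finset.sdiff_subset) hR)
      rw [hUR] at hle ⊢
      rw [neg_one_pow_sub hle, pow_add]
      ring
    rw [Finset.sum_congr rfl hcardU]
    rw [← Finset.mul_sum, sum_pow_neg_one_powerset]
    simp only [Finset.sdiff_eq_empty_iff_subset]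
    by_cases hTR : T ⊆ R
    · have : R = T := Finset.Subset.antisymm hR hTR
      subst this
      simp [← pow_add, ← two_mul]
    · have : R ≠ T := fun hh => hTR (hh ▸ subset_rfl)
      simp [hTR, this]
  symm
  calc ∑ S ∈ T.powerset, (-1 : ℚ) ^ (T.card - S.card) * B S
      = ∑ S ∈ T.powerset, ∑ R ∈ S.powerset, (-1 : ℚ) ^ (T.card - S.card) * E R := by
        simp_rw [h, Finset.mul_sum]
    _ = ∑ R ∈ T.powerset, ∑ S ∈ T.powerset with R ⊆ S,
          (-1 : ℚ) ^ (T.card - S.card) * E R := by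
        refine Finset.sum_comm' ?_
        intro S R
        simp only [Finset.mem_powerset, Finset.mem_filter]
        constructor
        · rintro ⟨h1, h2⟩; exact ⟨⟨h1, h2⟩, h2.trans h1⟩
        · rintro ⟨⟨h1, h2⟩, h3⟩; exact ⟨h1, h2⟩
    _ = ∑ R ∈ T.powerset, (if R = T then 1 else 0) * E R := by
        refine Finset.sum_congr rfl fun R hR => ?_
        rw [← Finset.sum_mul, key R hR]
    _ = E T := by
        simp only [ite_mul, one_mul, zero_mul]
        rw [Finset.sum_ite_eq' T.powerset]
        simp

end aux

/-- The weight enumerator coefficients of an [n,k] MDS code over a finite field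
with `q` elements (minimum distance `d_min = n - k + 1`): `A_0 = 1`, `A_w = 0` for
`1 ≤ w ≤ d_min - 1`, and
`A_w = ∑_{j=0}^{w-d_min} C(n,w) C(w,j) (-1)^j (q^(k+w-n-j) - 1)` for `d_min ≤ w ≤ n`. -/
theorem stmt_2 (n k q : ℕ) (F : Type) [Field F] [Fintype F] [DecidableEq F]
    (hq : q = Fintype.card F) (hk : 1 ≤ k) (hkn : k ≤ n)
    (C : Submodule F (Fin n → F)) (hdim : Module.finrank F C = k)
    (hMDS : IsLeast {w | ∃ c ∈ C, c ≠ 0 ∧ hammingNorm c = w} (n - k + 1))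
    (A : ℕ → ℕ)
    (hA : ∀ w, A w = Nat.card {c : Fin n → F // c ∈ C ∧ hammingNorm c = w}) :
    A 0 = 1 ∧
    (∀ w, 1 ≤ w → w ≤ n - k → A w = 0) ∧
    (∀ w, n - k + 1 ≤ w → w ≤ n →
      (A w : ℚ) = ∑ j ∈ Finset.range (w - (n - k + 1) + 1),
        (n.choose w : ℚ) * (w.choose j : ℚ) * (-1 : ℚ) ^ j *
          ((q : ℚ) ^ (k + w - n - j) - 1)) := by
  classical
  have hLB : ∀ c ∈ C, c ≠ 0 → n - k + 1 ≤ hammingNorm c :=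
    fun c hc h0 => hMDS.2 ⟨c, hc, h0, rfl⟩
  refine ⟨?_, ?_, ?_⟩
  · rw [hA, Nat.card_eq_one_iff_unique]
    constructor
    · constructor
      rintro ⟨c, hc, hc0⟩ ⟨d, hd, hd0⟩
      have : c = 0 := hammingNorm_eq_zero.1 hc0
      have : d = 0 := hammingNorm_eq_zero.1 hd0
      simp_all
    · exact ⟨⟨0, C.zero_mem, hammingNorm_zero⟩⟩
  · intro w h1 h2
    rw [hA]
    have : IsEmpty {c : Fin n → F // c ∈ C ∧ hammingNorm c = w} := by
      constructor
      rintro ⟨c, hc, hcw⟩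
      have hc0 : c ≠ 0 := by
        intro h0
        rw [h0, hammingNorm_zero] at hcw
        omega
      have := hLB c hc hc0
      omega
    exact Nat.card_of_isEmpty
  · intro w hw1 hw2
    -- support of a codeword
    set supp : (Fin n → F) → Finset (Fin n) := fun c => {i | c i ≠ 0} with hsupp
    have hwt : ∀ c : Fin n → F, hammingNorm c = (supp c).card := fun c => rfl
    -- Finset versions of the counts
    set Ef : Finset (Fin n) → ℕ :=
      fun T => #{c : Fin n → F | c ∈ C ∧ supp c = T} with hEf
    set Bf : Finset (Fin n) → ℕ :=
      fun T => #{c : Fin n → F | c ∈ C ∧ ∀ i ∉ T, c i = 0} with hBf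
    -- B count
    have hB : ∀ T : Finset (Fin n), Bf T = q ^ (k - (n - T.card)) := by
      intro T
      have h := count_lemma C hdim hq hLB hkn T
      rw [Nat.card_eq_fintype_card, Fintype.card_subtype] at h
      exact h
    -- B = sum of E over powerset
    have hBE : ∀ T : Finset (Fin n), Bf T = ∑ S ∈ T.powerset, Ef S := by
      intro T
      simp only [hBf]
      have hmap : ∀ c ∈ ({c : Fin n → F | c ∈ C ∧ ∀ i ∉ T, c i = 0} : Finset _),
          supp c ∈ T.powerset := by
        intro c hc
        simp only [mem_filter, mem_univ, true_and] at hc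
        rw [Finset.mem_powerset]
        intro i hi
        simp only [hsupp, mem_filter, mem_univ, true_and] at hi
        by_contra hiT
        exact hi (hc.2 i hiT)
      rw [Finset.card_eq_sum_card_fiberwise hmap]
      refine Finset.sum_congr rfl fun S hS => ?_
      rw [Finset.mem_powerset] at hS
      congr 1
      ext c
      simp only [mem_filter, mem_univ, true_and]
      constructor
      · rintro ⟨⟨h1, h2⟩, h3⟩; exact ⟨h1, h3⟩
      · rintro ⟨h1, h2⟩
        refine ⟨⟨h1, fun i hi => ?_⟩, h2⟩
        by_contra hci
        have : i ∈ supp c := by simp [hsupp, hci]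
        rw [h2] at this
        exact hi (hS this)
    -- Moebius inversion
    have hE : ∀ T : Finset (Fin n),
        (Ef T : ℚ) = ∑ S ∈ T.powerset, (-1 : ℚ) ^ (T.card - S.card) * (q : ℚ) ^ (k - (n - S.card)) := by
      intro T
      refine mobius_inv (fun S => (Ef S : ℚ))
        (fun S => (q : ℚ) ^ (k - (n - S.card))) (fun S => ?_) T
      show (q : ℚ) ^ (k - (n - S.card)) = _
      rw [← Nat.cast_pow, ← hB S, hBE S]
      push_cast
      rfl
    -- E depends only on the size
    have hE2 : ∀ T : Finset (Fin n), (Ef T : ℚ) =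
        ∑ m ∈ Finset.range (T.card + 1),
          (T.card.choose m : ℚ) * ((-1 : ℚ) ^ (T.card - m) * (q : ℚ) ^ (k - (n - m))) := by
      intro T
      rw [hE T]
      exact (Finset.sum_powerset_apply_card
          (f := fun m => (-1 : ℚ) ^ (T.card - m) * (q : ℚ) ^ (k - (n - m))) (x := T)).trans
        (Finset.sum_congr rfl fun m _ => nsmul_eq_mul _ _)
    -- partition A w by support
    have hAw : (A w : ℚ) = (n.choose w : ℚ) *
        ∑ m ∈ Finset.range (w + 1),
          (w.choose m : ℚ) * ((-1 : ℚ) ^ (w - m) * (q : ℚ) ^ (k - (n - m))) := by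
      have hA1 : A w = #{c : Fin n → F | c ∈ C ∧ hammingNorm c = w} := by
        rw [hA, Nat.card_eq_fintype_card, Fintype.card_subtype]
      have hA2 : A w = ∑ T ∈ Finset.powersetCard w (univ : Finset (Fin n)), Ef T := by
        rw [hA1]
        have hmap : ∀ c ∈ ({c : Fin n → F | c ∈ C ∧ hammingNorm c = w} : Finset _),
            supp c ∈ Finset.powersetCard w (univ : Finset (Fin n)) := by
          intro c hc
          simp only [mem_filter, mem_univ, true_and] at hc
          rw [Finset.mem_powersetCard]
          exact ⟨Finset.subset_univ _, by rw [← hwt c, hc.2]⟩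
        rw [Finset.card_eq_sum_card_fiberwise hmap]
        refine Finset.sum_congr rfl fun T hT => ?_
        rw [Finset.mem_powersetCard] at hT
        congr 1
        ext c
        simp only [mem_filter, mem_univ, true_and]
        constructor
        · rintro ⟨⟨h1, h2⟩, h3⟩; exact ⟨h1, h3⟩
        · rintro ⟨h1, h2⟩
          exact ⟨⟨h1, by rw [hwt c, h2, hT.2]⟩, h2⟩
      rw [hA2]
      push_cast
      have hc2 : ∑ T ∈ Finset.powersetCard w (univ : Finset (Fin n)), (Ef T : ℚ)
          = ∑ T ∈ Finset.powersetCard w (univ : Finset (Fin n)),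
              ∑ m ∈ Finset.range (w + 1),
                (w.choose m : ℚ) * ((-1 : ℚ) ^ (w - m) * (q : ℚ) ^ (k - (n - m))) :=
        Finset.sum_congr rfl fun T hT => by
          rw [hE2 T, (Finset.mem_powersetCard.1 hT).2]
      rw [hc2, Finset.sum_const, Finset.card_powersetCard, Finset.card_univ, Fintype.card_fin,
        nsmul_eq_mul]
    -- reindex the inner sum
    have hflip : ∑ m ∈ Finset.range (w + 1),
          (w.choose m : ℚ) * ((-1 : ℚ) ^ (w - m) * (q : ℚ) ^ (k - (n - m)))
        = ∑ j ∈ Finset.range (w + 1),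
          (w.choose j : ℚ) * ((-1 : ℚ) ^ j * (q : ℚ) ^ (k + w - n - j)) := by
      rw [← Finset.sum_flip (fun m => (w.choose m : ℚ) * ((-1 : ℚ) ^ (w - m) * (q : ℚ) ^ (k - (n - m))))]
      refine Finset.sum_congr rfl fun j hj => ?_
      rw [Finset.mem_range] at hj
      have hjw : j ≤ w := by omega
      have e2 : w - (w - j) = j := by omega
      have e3 : k - (n - (w - j)) = k + w - n - j := by omega
      rw [e2, e3, Nat.choose_symm hjw]
    -- split off the alternating sum of binomial coefficients
    have halt : ∑ j ∈ Finset.range (w + 1), (-1 : ℚ) ^ j * (w.choose j : ℚ) = 0 := by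
      have := Int.alternating_sum_range_choose_of_ne (n := w) (by omega)
      exact_mod_cast congrArg (fun z : ℤ => (z : ℚ)) this
    have hsplit : ∑ j ∈ Finset.range (w + 1),
          (w.choose j : ℚ) * ((-1 : ℚ) ^ j * (q : ℚ) ^ (k + w - n - j))
        = ∑ j ∈ Finset.range (w + 1),
          (w.choose j : ℚ) * ((-1 : ℚ) ^ j * ((q : ℚ) ^ (k + w - n - j) - 1)) := by
      rw [← sub_eq_zero]
      rw [← Finset.sum_sub_distrib]
      rw [← halt]
      refine Finset.sum_congr rfl fun j _ => ?_
      ring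
    -- truncate the sum
    have htrunc : ∑ j ∈ Finset.range (w + 1),
          (w.choose j : ℚ) * ((-1 : ℚ) ^ j * ((q : ℚ) ^ (k + w - n - j) - 1))
        = ∑ j ∈ Finset.range (w - (n - k + 1) + 1),
          (w.choose j : ℚ) * ((-1 : ℚ) ^ j * ((q : ℚ) ^ (k + w - n - j) - 1)) := by
      symm
      refine Finset.sum_subset (Finset.range_subset_range.2 (by omega)) (fun j hj hj' => ?_)
      rw [Finset.mem_range] at hj hj'
      have : k + w - n - j = 0 := by omega
      rw [this]
      norm_num
    rw [hAw, hflip, hsplit, htrunc, Finset.mul_sum]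
    refine Finset.sum_congr rfl fun j _ => ?_
    ring
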